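/- Let X and W be random variables taking values in finite sets, let E be a finite index set, and for each s ∈ E let Z_s be a random variable taking values in a finite set, all on a common probability space. Assume that the family consisting of W together with all the Z_s, s ∈ E, is conditionally independent given X. For a finite set A ⊆ E write Z_A for the tuple (Z_s)_{s ∈ A}. Then the set function A ↦ I(X; Z_A | W) is submodular and nondecreasing, with I(X; Z_∅ | W) = 0. -/

import Mathlib

open MeasureTheory

/-- Shannon entropy `H(X) = ∑ₓ −P(X=x) log P(X=x)` of a random variable `X`
taking values in a finite set. -/
noncomputable def Hent {Ω : Type*} [MeasurableSpace Ω] (Pr : Measure Ω)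
    {S : Type*} [Fintype S] (X : Ω → S) : ℝ :=
  ∑ x : S, Real.negMulLog (Pr {ω | X ω = x}).toReal

/-- Conditional entropy `H(X|Y) = H(X,Y) − H(Y)`. -/
noncomputable def condHent {Ω : Type*} [MeasurableSpace Ω] (Pr : Measure Ω)
    {S T : Type*} [Fintype S] [Fintype T] (X : Ω → S) (Y : Ω → T) : ℝ :=
  Hent Pr (fun ω => (X ω, Y ω)) - Hent Pr Y

/-- Mutual information `I(X;Y) = H(X) + H(Y) − H(X,Y)`. -/
noncomputable def mutualInfo {Ω : Type*} [MeasurableSpace Ω] (Pr : Measure Ω)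
    {S T : Type*} [Fintype S] [Fintype T] (X : Ω → S) (Y : Ω → T) : ℝ :=
  Hent Pr X + Hent Pr Y - Hent Pr (fun ω => (X ω, Y ω))

/-- Conditional mutual information `I(X;Z|Y) = H(X|Y) + H(Z|Y) − H(X,Z|Y)`. -/
noncomputable def condMutualInfo {Ω : Type*} [MeasurableSpace Ω] (Pr : Measure Ω)
    {S T U : Type*} [Fintype S] [Fintype T] [Fintype U]
    (X : Ω → S) (Z : Ω → U) (Y : Ω → T) : ℝ :=
  condHent Pr X Y + condHent Pr Z Y - condHent Pr (fun ω => (X ω, Z ω)) Y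

/-- The joint random variable `Z_A = (Z_s)_{s ∈ A}` for a finite index set `A`. -/
def tupleRV {Ω : Type*} {E : Type*} {V : E → Type*} (Z : (s : E) → Ω → V s)
    (A : Finset E) : Ω → ((s : A) → V s) :=
  fun ω s => Z s ω

/-- The family consisting of `W` together with all the `Z s`, `s ∈ E`, is conditionally
independent given `X`: whenever `P(X=x) > 0`, the conditional joint distribution of
`(W, (Z s)_s)` given `X = x` is the product of the conditional marginals. -/
def FamilyWithWCondIndepGiven {Ω : Type*} [MeasurableSpace Ω] (Pr : Measure Ω)
    {S VW : Type*} {E : Type*} [Fintype E] {V : E → Type*}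
    (X : Ω → S) (W : Ω → VW) (Z : (s : E) → Ω → V s) : Prop :=
  ∀ x : S, Pr {ω | X ω = x} ≠ 0 → ∀ (w : VW) (z : (s : E) → V s),
    (Pr {ω | W ω = w ∧ (∀ s, Z s ω = z s) ∧ X ω = x}).toReal / (Pr {ω | X ω = x}).toReal
      = ((Pr {ω | W ω = w ∧ X ω = x}).toReal / (Pr {ω | X ω = x}).toReal)
        * ∏ s : E, ((Pr {ω | Z s ω = z s ∧ X ω = x}).toReal / (Pr {ω | X ω = x}).toReal)

/-- A set function `F` on finite subsets of `E` is submodular if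
`F (A ∪ {s}) − F A ≥ F (B ∪ {s}) − F B` for all finite `A ⊆ B` and all `s ∉ B`. -/
def Submodular {E : Type*} [DecidableEq E] (F : Finset E → ℝ) : Prop :=
  ∀ A B : Finset E, A ⊆ B → ∀ s ∉ B,
    F (insert s A) - F A ≥ F (insert s B) - F B


set_option linter.unusedSectionVars false
set_option maxHeartbeats 1000000

lemma sum_comm3 {α β γ M : Type*} [Fintype α] [Fintype β] [Fintype γ] [AddCommMonoid M]
    (f : α → β → γ → M) :
    ∑ a, ∑ b, ∑ c, f a b c = ∑ c, ∑ a, ∑ b, f a b c :=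
  (Finset.sum_congr rfl (fun _ _ => Finset.sum_comm)).trans Finset.sum_comm

lemma Hent_comp_inj {Ω : Type*} [MeasurableSpace Ω] (Pr : Measure Ω)
    {T T' : Type*} [Fintype T] [Fintype T'] (Y : Ω → T) (e : T → T')
    (he : Function.Injective e) :
    Hent Pr (fun ω => e (Y ω)) = Hent Pr Y := by
  classical
  unfold Hent
  rw [← Finset.sum_subset (Finset.subset_univ (Finset.univ.image e))]
  · rw [Finset.sum_image (fun x _ y _ h => he h)]
    refine Finset.sum_congr rfl fun t _ => ?_
    have hs : {ω | e (Y ω) = e t} = {ω | Y ω = t} := by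
      ext ω; simp [he.eq_iff]
    rw [hs]
  · intro t' _ ht'
    have hs : {ω | e (Y ω) = t'} = ∅ := by
      ext ω
      simp only [Set.mem_setOf_eq, Set.mem_empty_iff_false, iff_false]
      intro h
      exact ht' (Finset.mem_image.2 ⟨Y ω, Finset.mem_univ _, h⟩)
    simp [hs]

lemma marg {Ω : Type*} [MeasurableSpace Ω] (Pr : Measure Ω) [IsProbabilityMeasure Pr]
    {T : Type*} [Fintype T] (g : Ω → T) (hg : ∀ t : T, MeasurableSet {ω | g ω = t})
    (t : Set Ω) (ht : MeasurableSet t) :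
    (Pr t).toReal = ∑ b : T, (Pr (t ∩ {ω | g ω = b})).toReal := by
  classical
  have hunion : t = ⋃ b ∈ (Finset.univ : Finset T), t ∩ {ω | g ω = b} := by
    ext ω; simp
  have hmeas := measure_biUnion_finset (μ := Pr)
    (f := fun b => t ∩ {ω | g ω = b}) (s := Finset.univ)
    (by
      intro b _ b' _ hbb'
      refine Set.disjoint_left.2 fun ω hb hb' => hbb' ?_
      exact hb.2.symm.trans hb'.2)
    (fun b _ => ht.inter (hg b))
  rw [← hunion] at hmeas
  rw [hmeas, ENNReal.toReal_sum fun b _ => measure_ne_top Pr _]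

lemma Hent_pair_eq {Ω : Type*} [MeasurableSpace Ω] (Pr : Measure Ω)
    {A C : Type*} [Fintype A] [Fintype C] (F : Ω → A) (G : Ω → C) :
    Hent Pr (fun ω => (F ω, G ω))
      = ∑ a : A, ∑ c : C, Real.negMulLog (Pr {ω | F ω = a ∧ G ω = c}).toReal := by
  unfold Hent
  rw [Fintype.sum_prod_type]
  refine Finset.sum_congr rfl fun a _ => Finset.sum_congr rfl fun c _ => ?_
  have hs : {ω | (F ω, G ω) = (a, c)} = {ω | F ω = a ∧ G ω = c} := by
    ext ω; simp [Prod.ext_iff]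
  rw [hs]

lemma Hent_triple_eq {Ω : Type*} [MeasurableSpace Ω] (Pr : Measure Ω)
    {A B C : Type*} [Fintype A] [Fintype B] [Fintype C]
    (F : Ω → A) (G : Ω → B) (K : Ω → C) :
    Hent Pr (fun ω => (F ω, G ω, K ω))
      = ∑ a : A, ∑ b : B, ∑ c : C,
          Real.negMulLog (Pr {ω | F ω = a ∧ G ω = b ∧ K ω = c}).toReal := by
  unfold Hent
  rw [Fintype.sum_prod_type]
  refine Finset.sum_congr rfl fun a _ => ?_
  rw [Fintype.sum_prod_type]
  refine Finset.sum_congr rfl fun b _ => Finset.sum_congr rfl fun c _ => ?_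
  have hs : {ω | (F ω, G ω, K ω) = (a, b, c)} = {ω | F ω = a ∧ G ω = b ∧ K ω = c} := by
    ext ω; simp [Prod.ext_iff]
  rw [hs]

open Real in
lemma key1 {α β γ : Type*} [Fintype α] [Fintype β] [Fintype γ]
    (p : α → β → γ → ℝ) (hp : ∀ a b c, 0 ≤ p a b c)
    (hsum : ∑ a, ∑ b, ∑ c, p a b c = 1) :
    ∑ a, ∑ b, ∑ c, Real.negMulLog (p a b c) + ∑ c, Real.negMulLog (∑ a, ∑ b, p a b c)
      ≤ ∑ a, ∑ c, Real.negMulLog (∑ b, p a b c)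
        + ∑ b, ∑ c, Real.negMulLog (∑ a, p a b c) := by
  set p13 : α → γ → ℝ := fun a c => ∑ b, p a b c with hp13
  set p23 : β → γ → ℝ := fun b c => ∑ a, p a b c with hp23
  set p3 : γ → ℝ := fun c => ∑ a, ∑ b, p a b c with hp3
  have h13nn : ∀ a c, 0 ≤ p13 a c := fun a c => Finset.sum_nonneg fun b _ => hp a b c
  have h23nn : ∀ b c, 0 ≤ p23 b c := fun b c => Finset.sum_nonneg fun a _ => hp a b c
  have h3nn : ∀ c, 0 ≤ p3 c := fun c =>
    Finset.sum_nonneg fun a _ => Finset.sum_nonneg fun b _ => hp a b c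
  -- expansions into triple sums
  have e3 : ∑ c, Real.negMulLog (p3 c) = ∑ a, ∑ b, ∑ c, (-(p a b c) * Real.log (p3 c)) := by
    rw [sum_comm3 (fun a b c => (-(p a b c) * Real.log (p3 c)))]
    refine Finset.sum_congr rfl fun c _ => ?_
    simp [Real.negMulLog, hp3, Finset.sum_mul, neg_mul]
  have e13 : ∑ a, ∑ c, Real.negMulLog (p13 a c)
      = ∑ a, ∑ b, ∑ c, (-(p a b c) * Real.log (p13 a c)) := by
    refine Finset.sum_congr rfl fun a _ => ?_
    rw [Finset.sum_comm]
    refine Finset.sum_congr rfl fun c _ => ?_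
    simp [Real.negMulLog, hp13, Finset.sum_mul, neg_mul]
  have e23 : ∑ b, ∑ c, Real.negMulLog (p23 b c)
      = ∑ a, ∑ b, ∑ c, (-(p a b c) * Real.log (p23 b c)) := by
    rw [← sum_comm3 (fun b c a => (-(p a b c) * Real.log (p23 b c)))]
    refine Finset.sum_congr rfl fun b _ => Finset.sum_congr rfl fun c _ => ?_
    simp [Real.negMulLog, hp23, Finset.sum_mul, neg_mul]
  -- the termwise bound
  have hterm : ∀ a b c,
      p a b c - p13 a c * p23 b c / p3 c ≤
        (-(p a b c) * Real.log (p13 a c)) + (-(p a b c) * Real.log (p23 b c))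
          - (Real.negMulLog (p a b c) + (-(p a b c) * Real.log (p3 c))) := by
    intro a b c
    rcases eq_or_lt_of_le (hp a b c) with h0 | hpos
    · have hnn : 0 ≤ p13 a c * p23 b c / p3 c :=
        div_nonneg (mul_nonneg (h13nn _ _) (h23nn _ _)) (h3nn _)
      rw [← h0]
      simp [Real.negMulLog]
      linarith
    · have h13 : 0 < p13 a c :=
        lt_of_lt_of_le hpos (Finset.single_le_sum (fun b _ => hp a b c) (Finset.mem_univ b))
      have h23 : 0 < p23 b c :=
        lt_of_lt_of_le hpos (Finset.single_le_sum (fun a _ => hp a b c) (Finset.mem_univ a))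
      have h3 : 0 < p3 c :=
        lt_of_lt_of_le h13 (Finset.single_le_sum (fun a _ => h13nn a c) (Finset.mem_univ a))
      have hlog := Real.log_le_sub_one_of_pos
        (show 0 < p13 a c * p23 b c / (p a b c * p3 c) by positivity)
      rw [Real.log_div (by positivity) (by positivity),
        Real.log_mul (ne_of_gt h13) (ne_of_gt h23),
        Real.log_mul (ne_of_gt hpos) (ne_of_gt h3)] at hlog
      have hmul := mul_le_mul_of_nonneg_left hlog (le_of_lt hpos)
      have hfrac : p a b c * (p13 a c * p23 b c / (p a b c * p3 c) - 1)
          = p13 a c * p23 b c / p3 c - p a b c := by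
        field_simp
      rw [hfrac] at hmul
      simp only [Real.negMulLog]
      nlinarith [hmul]
  -- sum of the upper bounds
  have hsum2 : ∑ a, ∑ b, ∑ c, (p13 a c * p23 b c / p3 c) ≤ 1 := by
    rw [sum_comm3 (fun a b c => p13 a c * p23 b c / p3 c)]
    have hc : ∀ c, ∑ a, ∑ b, (p13 a c * p23 b c / p3 c) ≤ p3 c := by
      intro c
      rcases eq_or_lt_of_le (h3nn c) with h0 | hpos
      · have hz : ∀ a, p13 a c = 0 := by
          intro a
          have := (Finset.sum_eq_zero_iff_of_nonneg (fun a _ => h13nn a c)).1 h0.symm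
          exact this a (Finset.mem_univ a)
        simp [hz, ← h0]
      · have heq : ∑ a, ∑ b, (p13 a c * p23 b c / p3 c)
            = (∑ a, p13 a c) * (∑ b, p23 b c) / p3 c := by
          rw [Finset.sum_mul, Finset.sum_div]
          refine Finset.sum_congr rfl fun a _ => ?_
          rw [Finset.mul_sum, Finset.sum_div]
        rw [heq]
        have h1 : ∑ a, p13 a c = p3 c := rfl
        have h2 : ∑ b, p23 b c = p3 c := Finset.sum_comm
        rw [h1, h2, mul_div_assoc, div_self (ne_of_gt hpos), mul_one]
    calc ∑ c, ∑ a, ∑ b, (p13 a c * p23 b c / p3 c) ≤ ∑ c, p3 c :=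
          Finset.sum_le_sum fun c _ => hc c
      _ = 1 := by rw [hp3, ← sum_comm3 p, hsum]
  -- assemble
  have hstep : ∑ a, ∑ b, ∑ c, (p a b c - p13 a c * p23 b c / p3 c)
      ≤ ∑ a, ∑ b, ∑ c, ((-(p a b c) * Real.log (p13 a c)) + (-(p a b c) * Real.log (p23 b c))
          - (Real.negMulLog (p a b c) + (-(p a b c) * Real.log (p3 c)))) :=
    Finset.sum_le_sum fun a _ => Finset.sum_le_sum fun b _ => Finset.sum_le_sum fun c _ =>
      hterm a b c
  simp only [Finset.sum_sub_distrib, Finset.sum_add_distrib] at hstep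
  rw [e3, e13, e23]
  linarith [hstep, hsum2, hsum]

open Real in
lemma key2 {α β γ : Type*} [Fintype α] [Fintype β] [Fintype γ]
    (p : α → β → γ → ℝ) (hp : ∀ a b c, 0 ≤ p a b c)
    (hfac : ∀ a b c, p a b c * (∑ a', ∑ c', p a' b c')
      = (∑ c', p a b c') * (∑ a', p a' b c)) :
    ∑ a, ∑ b, ∑ c, Real.negMulLog (p a b c) + ∑ b, Real.negMulLog (∑ a, ∑ c, p a b c)
      = ∑ a, ∑ b, Real.negMulLog (∑ c, p a b c)
        + ∑ b, ∑ c, Real.negMulLog (∑ a, p a b c) := by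
  set p12 : α → β → ℝ := fun a b => ∑ c, p a b c with hp12
  set p23 : β → γ → ℝ := fun b c => ∑ a, p a b c with hp23
  set p2 : β → ℝ := fun b => ∑ a, ∑ c, p a b c with hp2
  have e2 : ∑ b, Real.negMulLog (p2 b) = ∑ a, ∑ b, ∑ c, (-(p a b c) * Real.log (p2 b)) := by
    rw [Finset.sum_comm]
    refine Finset.sum_congr rfl fun b _ => ?_
    simp [Real.negMulLog, hp2, Finset.sum_mul, neg_mul]
  have e12 : ∑ a, ∑ b, Real.negMulLog (p12 a b)
      = ∑ a, ∑ b, ∑ c, (-(p a b c) * Real.log (p12 a b)) := by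
    refine Finset.sum_congr rfl fun a _ => Finset.sum_congr rfl fun b _ => ?_
    simp [Real.negMulLog, hp12, Finset.sum_mul, neg_mul]
  have e23 : ∑ b, ∑ c, Real.negMulLog (p23 b c)
      = ∑ a, ∑ b, ∑ c, (-(p a b c) * Real.log (p23 b c)) := by
    rw [← sum_comm3 (fun b c a => (-(p a b c) * Real.log (p23 b c)))]
    refine Finset.sum_congr rfl fun b _ => Finset.sum_congr rfl fun c _ => ?_
    simp [Real.negMulLog, hp23, Finset.sum_mul, neg_mul]
  have hterm : ∀ a b c,
      Real.negMulLog (p a b c) + (-(p a b c) * Real.log (p2 b))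
        = (-(p a b c) * Real.log (p12 a b)) + (-(p a b c) * Real.log (p23 b c)) := by
    intro a b c
    rcases eq_or_lt_of_le (hp a b c) with h0 | hpos
    · rw [← h0]; simp [Real.negMulLog]
    · have h12 : 0 < p12 a b :=
        lt_of_lt_of_le hpos (Finset.single_le_sum (fun c _ => hp a b c) (Finset.mem_univ c))
      have h23 : 0 < p23 b c :=
        lt_of_lt_of_le hpos (Finset.single_le_sum (fun a _ => hp a b c) (Finset.mem_univ a))
      have h2 : 0 < p2 b :=
        lt_of_lt_of_le h12 (Finset.single_le_sum (fun a _ => Finset.sum_nonneg fun c _ => hp a b c) (Finset.mem_univ a))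
      have hlogs : Real.log (p a b c) + Real.log (p2 b)
          = Real.log (p12 a b) + Real.log (p23 b c) := by
        rw [← Real.log_mul (ne_of_gt hpos) (ne_of_gt h2),
          ← Real.log_mul (ne_of_gt h12) (ne_of_gt h23)]
        exact congrArg Real.log (hfac a b c)
      simp only [Real.negMulLog, neg_mul]
      nlinarith [hlogs]
  calc ∑ a, ∑ b, ∑ c, Real.negMulLog (p a b c) + ∑ b, Real.negMulLog (p2 b)
      = ∑ a, ∑ b, ∑ c, (Real.negMulLog (p a b c) + (-(p a b c) * Real.log (p2 b))) := by
        rw [e2]; simp only [Finset.sum_add_distrib]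
    _ = ∑ a, ∑ b, ∑ c, ((-(p a b c) * Real.log (p12 a b)) + (-(p a b c) * Real.log (p23 b c))) := by
        exact Finset.sum_congr rfl fun a _ => Finset.sum_congr rfl fun b _ =>
          Finset.sum_congr rfl fun c _ => hterm a b c
    _ = ∑ a, ∑ b, Real.negMulLog (p12 a b) + ∑ b, ∑ c, Real.negMulLog (p23 b c) := by
        rw [e12, e23]; simp only [Finset.sum_add_distrib]

section RV
variable {Ω : Type*} [MeasurableSpace Ω] (Pr : Measure Ω) [IsProbabilityMeasure Pr]
  {A B C : Type*} [Fintype A] [Fintype B] [Fintype C]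
  (U : Ω → A) (Vb : Ω → B) (Wr : Ω → C)

-- the basic marginalization identities for the triple pmf
lemma marg_triple_b
    (hV : ∀ b, MeasurableSet {ω | Vb ω = b})
    (hUW : ∀ a c, MeasurableSet {ω | U ω = a ∧ Wr ω = c}) (a : A) (c : C) :
    (Pr {ω | U ω = a ∧ Wr ω = c}).toReal
      = ∑ b : B, (Pr {ω | U ω = a ∧ Vb ω = b ∧ Wr ω = c}).toReal := by
  rw [marg Pr Vb hV _ (hUW a c)]
  refine Finset.sum_congr rfl fun b _ => ?_
  have hs : {ω | U ω = a ∧ Wr ω = c} ∩ {ω | Vb ω = b} = {ω | U ω = a ∧ Vb ω = b ∧ Wr ω = c} := by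
    ext ω
    simp only [Set.mem_inter_iff, Set.mem_setOf_eq]
    tauto
  rw [hs]

lemma marg_triple_a
    (hU : ∀ a, MeasurableSet {ω | U ω = a})
    (hVW : ∀ b c, MeasurableSet {ω | Vb ω = b ∧ Wr ω = c}) (b : B) (c : C) :
    (Pr {ω | Vb ω = b ∧ Wr ω = c}).toReal
      = ∑ a : A, (Pr {ω | U ω = a ∧ Vb ω = b ∧ Wr ω = c}).toReal := by
  rw [marg Pr U hU _ (hVW b c)]
  refine Finset.sum_congr rfl fun a _ => ?_
  have hs : {ω | Vb ω = b ∧ Wr ω = c} ∩ {ω | U ω = a} = {ω | U ω = a ∧ Vb ω = b ∧ Wr ω = c} := by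
    ext ω
    simp only [Set.mem_inter_iff, Set.mem_setOf_eq]
    tauto
  rw [hs]

lemma marg_pair
    (hV : ∀ b, MeasurableSet {ω | Vb ω = b})
    (hU : ∀ a, MeasurableSet {ω | U ω = a}) (a : A) :
    (Pr {ω | U ω = a}).toReal = ∑ b : B, (Pr {ω | U ω = a ∧ Vb ω = b}).toReal := by
  rw [marg Pr Vb hV _ (hU a)]
  refine Finset.sum_congr rfl fun b _ => ?_
  have hs : {ω | U ω = a} ∩ {ω | Vb ω = b} = {ω | U ω = a ∧ Vb ω = b} := by
    ext ω
    simp only [Set.mem_inter_iff, Set.mem_setOf_eq]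
  rw [hs]

lemma total_one (hU : ∀ a, MeasurableSet {ω | U ω = a}) :
    ∑ a : A, (Pr {ω | U ω = a}).toReal = 1 := by
  have h := marg Pr U hU Set.univ MeasurableSet.univ
  simp only [Set.univ_inter, measure_univ, ENNReal.toReal_one] at h
  exact h.symm

lemma hent_strong_subadd
    (hU : ∀ a, MeasurableSet {ω | U ω = a})
    (hV : ∀ b, MeasurableSet {ω | Vb ω = b})
    (hW : ∀ c, MeasurableSet {ω | Wr ω = c}) :
    Hent Pr (fun ω => (U ω, Vb ω, Wr ω)) + Hent Pr Wr
      ≤ Hent Pr (fun ω => (U ω, Wr ω)) + Hent Pr (fun ω => (Vb ω, Wr ω)) := by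
  classical
  set p : A → B → C → ℝ :=
    fun a b c => (Pr {ω | U ω = a ∧ Vb ω = b ∧ Wr ω = c}).toReal with hpdef
  have hUW : ∀ a c, MeasurableSet {ω | U ω = a ∧ Wr ω = c} := by
    intro a c
    have : {ω | U ω = a ∧ Wr ω = c} = {ω | U ω = a} ∩ {ω | Wr ω = c} := rfl
    rw [this]; exact (hU a).inter (hW c)
  have hVW : ∀ b c, MeasurableSet {ω | Vb ω = b ∧ Wr ω = c} := by
    intro b c
    have : {ω | Vb ω = b ∧ Wr ω = c} = {ω | Vb ω = b} ∩ {ω | Wr ω = c} := rfl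
    rw [this]; exact (hV b).inter (hW c)
  have hii : ∀ a c, (Pr {ω | U ω = a ∧ Wr ω = c}).toReal = ∑ b, p a b c :=
    marg_triple_b Pr U Vb Wr hV hUW
  have hiii : ∀ b c, (Pr {ω | Vb ω = b ∧ Wr ω = c}).toReal = ∑ a, p a b c :=
    marg_triple_a Pr U Vb Wr hU hVW
  have hiv : ∀ c, (Pr {ω | Wr ω = c}).toReal = ∑ a, ∑ b, p a b c := by
    intro c
    rw [marg_pair Pr Wr U hU hW c]
    refine Finset.sum_congr rfl fun a _ => ?_
    have hs : {ω | Wr ω = c ∧ U ω = a} = {ω | U ω = a ∧ Wr ω = c} := by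
      ext ω; simp only [Set.mem_setOf_eq]; tauto
    rw [hs, hii a c]
  have hsum : ∑ a, ∑ b, ∑ c, p a b c = 1 := by
    have h1 := total_one Pr U hU
    have h2 : ∀ a, (Pr {ω | U ω = a}).toReal = ∑ b, (Pr {ω | U ω = a ∧ Vb ω = b}).toReal :=
      marg_pair Pr U Vb hV hU
    have h3 : ∀ a b, (Pr {ω | U ω = a ∧ Vb ω = b}).toReal = ∑ c, p a b c := by
      intro a b
      have hUV : MeasurableSet {ω | U ω = a ∧ Vb ω = b} := by
        have : {ω | U ω = a ∧ Vb ω = b} = {ω | U ω = a} ∩ {ω | Vb ω = b} := rfl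
        rw [this]; exact (hU a).inter (hV b)
      rw [marg Pr Wr hW _ hUV]
      refine Finset.sum_congr rfl fun c _ => ?_
      have hs : {ω | U ω = a ∧ Vb ω = b} ∩ {ω | Wr ω = c}
          = {ω | U ω = a ∧ Vb ω = b ∧ Wr ω = c} := by
        ext ω; simp only [Set.mem_inter_iff, Set.mem_setOf_eq]; tauto
      rw [hs]
    rw [← h1]
    refine Finset.sum_congr rfl fun a _ => ?_
    rw [h2 a]
    exact Finset.sum_congr rfl fun b _ => (h3 a b).symm
  have hkey := key1 p (fun a b c => ENNReal.toReal_nonneg) hsum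
  rw [Hent_triple_eq, Hent_pair_eq, Hent_pair_eq]
  have hWent : Hent Pr Wr = ∑ c, Real.negMulLog (∑ a, ∑ b, p a b c) := by
    unfold Hent
    exact Finset.sum_congr rfl fun c _ => by rw [hiv c]
  rw [hWent]
  calc ∑ a, ∑ b, ∑ c, Real.negMulLog (p a b c) + ∑ c, Real.negMulLog (∑ a, ∑ b, p a b c)
      ≤ ∑ a, ∑ c, Real.negMulLog (∑ b, p a b c)
        + ∑ b, ∑ c, Real.negMulLog (∑ a, p a b c) := hkey
    _ = ∑ a, ∑ c, Real.negMulLog (Pr {ω | U ω = a ∧ Wr ω = c}).toReal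
        + ∑ b, ∑ c, Real.negMulLog (Pr {ω | Vb ω = b ∧ Wr ω = c}).toReal := by
        congr 1
        · exact Finset.sum_congr rfl fun a _ => Finset.sum_congr rfl fun c _ => by rw [hii a c]
        · exact Finset.sum_congr rfl fun b _ => Finset.sum_congr rfl fun c _ => by rw [hiii b c]

lemma hent_condIndep_eq
    (hU : ∀ a, MeasurableSet {ω | U ω = a})
    (hV : ∀ b, MeasurableSet {ω | Vb ω = b})
    (hW : ∀ c, MeasurableSet {ω | Wr ω = c})
    (hfac : ∀ a b c, (Pr {ω | U ω = a ∧ Vb ω = b ∧ Wr ω = c}).toReal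
        * (Pr {ω | Vb ω = b}).toReal
      = (Pr {ω | U ω = a ∧ Vb ω = b}).toReal * (Pr {ω | Vb ω = b ∧ Wr ω = c}).toReal) :
    Hent Pr (fun ω => (U ω, Vb ω, Wr ω)) + Hent Pr Vb
      = Hent Pr (fun ω => (U ω, Vb ω)) + Hent Pr (fun ω => (Vb ω, Wr ω)) := by
  classical
  set p : A → B → C → ℝ :=
    fun a b c => (Pr {ω | U ω = a ∧ Vb ω = b ∧ Wr ω = c}).toReal with hpdef
  have hUV : ∀ a b, MeasurableSet {ω | U ω = a ∧ Vb ω = b} := by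
    intro a b
    have : {ω | U ω = a ∧ Vb ω = b} = {ω | U ω = a} ∩ {ω | Vb ω = b} := rfl
    rw [this]; exact (hU a).inter (hV b)
  have hVW : ∀ b c, MeasurableSet {ω | Vb ω = b ∧ Wr ω = c} := by
    intro b c
    have : {ω | Vb ω = b ∧ Wr ω = c} = {ω | Vb ω = b} ∩ {ω | Wr ω = c} := rfl
    rw [this]; exact (hV b).inter (hW c)
  have h12 : ∀ a b, (Pr {ω | U ω = a ∧ Vb ω = b}).toReal = ∑ c, p a b c := by
    intro a b
    rw [marg Pr Wr hW _ (hUV a b)]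
    refine Finset.sum_congr rfl fun c _ => ?_
    have hs : {ω | U ω = a ∧ Vb ω = b} ∩ {ω | Wr ω = c}
        = {ω | U ω = a ∧ Vb ω = b ∧ Wr ω = c} := by
      ext ω; simp only [Set.mem_inter_iff, Set.mem_setOf_eq]; tauto
    rw [hs]
  have h23 : ∀ b c, (Pr {ω | Vb ω = b ∧ Wr ω = c}).toReal = ∑ a, p a b c :=
    marg_triple_a Pr U Vb Wr hU hVW
  have h2 : ∀ b, (Pr {ω | Vb ω = b}).toReal = ∑ a, ∑ c, p a b c := by
    intro b
    rw [marg_pair Pr Vb U hU hV b]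
    refine Finset.sum_congr rfl fun a _ => ?_
    have hs : {ω | Vb ω = b ∧ U ω = a} = {ω | U ω = a ∧ Vb ω = b} := by
      ext ω; simp only [Set.mem_setOf_eq]; tauto
    rw [hs, h12 a b]
  have hkey := key2 p (fun a b c => ENNReal.toReal_nonneg) (by
    intro a b c
    have := hfac a b c
    rw [h2 b, h12 a b, h23 b c] at this
    exact this)
  rw [Hent_triple_eq, Hent_pair_eq, Hent_pair_eq]
  have hVent : Hent Pr Vb = ∑ b, Real.negMulLog (∑ a, ∑ c, p a b c) := by
    unfold Hent
    exact Finset.sum_congr rfl fun b _ => by rw [h2 b]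
  rw [hVent]
  calc ∑ a, ∑ b, ∑ c, Real.negMulLog (p a b c) + ∑ b, Real.negMulLog (∑ a, ∑ c, p a b c)
      = ∑ a, ∑ b, Real.negMulLog (∑ c, p a b c)
        + ∑ b, ∑ c, Real.negMulLog (∑ a, p a b c) := hkey
    _ = ∑ a, ∑ b, Real.negMulLog (Pr {ω | U ω = a ∧ Vb ω = b}).toReal
        + ∑ b, ∑ c, Real.negMulLog (Pr {ω | Vb ω = b ∧ Wr ω = c}).toReal := by
        congr 1
        · exact Finset.sum_congr rfl fun a _ => Finset.sum_congr rfl fun b _ => by rw [h12 a b]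
        · exact Finset.sum_congr rfl fun b _ => Finset.sum_congr rfl fun c _ => by rw [h23 b c]
end RV


lemma famMarg {Ω : Type*} [MeasurableSpace Ω] (Pr : Measure Ω) [IsProbabilityMeasure Pr]
    {S : Type*} [Fintype S] [MeasurableSpace S] [MeasurableSingletonClass S]
    {VW : Type*} [Fintype VW] [MeasurableSpace VW] [MeasurableSingletonClass VW]
    {E : Type*} [Fintype E] [DecidableEq E]
    {V : E → Type*} [∀ s, Fintype (V s)]
    [∀ s, MeasurableSpace (V s)] [∀ s, MeasurableSingletonClass (V s)]
    (X : Ω → S) (hX : Measurable X)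
    (W : Ω → VW) (hW : Measurable W)
    (Z : (s : E) → Ω → V s) (hZ : ∀ s, Measurable (Z s))
    (hindep : FamilyWithWCondIndepGiven Pr X W Z)
    (D : Finset E) (z : ∀ t, V t) (w : VW) (x : S) (hx : Pr {ω | X ω = x} ≠ 0) :
    (Pr {ω | W ω = w ∧ (∀ t ∈ D, Z t ω = z t) ∧ X ω = x}).toReal
        / (Pr {ω | X ω = x}).toReal
      = ((Pr {ω | W ω = w ∧ X ω = x}).toReal / (Pr {ω | X ω = x}).toReal)
        * ∏ t ∈ D, ((Pr {ω | Z t ω = z t ∧ X ω = x}).toReal / (Pr {ω | X ω = x}).toReal) := by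
  classical
  set N : ℝ := (Pr {ω | X ω = x}).toReal with hN
  have hNpos : 0 < N := ENNReal.toReal_pos hx (measure_ne_top Pr _)
  set G : (t : E) → V t → ℝ := fun t u => (Pr {ω | Z t ω = u ∧ X ω = x}).toReal / N with hG
  have hfZ : ∀ (t : E) (u : V t), MeasurableSet {ω | Z t ω = u} :=
    fun t u => hZ t (measurableSet_singleton u)
  have hfX : ∀ x' : S, MeasurableSet {ω | X ω = x'} :=
    fun x' => hX (measurableSet_singleton x')
  have hfW : ∀ w' : VW, MeasurableSet {ω | W ω = w'} :=
    fun w' => hW (measurableSet_singleton w')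
  -- sum of G over values is 1
  have hGsum : ∀ t : E, ∑ u : V t, G t u = 1 := by
    intro t
    have h := marg Pr (Z t) (hfZ t) {ω | X ω = x} (hfX x)
    have h2 : ∀ u, {ω | X ω = x} ∩ {ω | Z t ω = u} = {ω | Z t ω = u ∧ X ω = x} := by
      intro u; ext ω; simp only [Set.mem_inter_iff, Set.mem_setOf_eq]; tauto
    simp only [h2] at h
    rw [hG]
    rw [← Finset.sum_div]
    rw [← h, div_self (ne_of_gt hNpos)]
  -- fibers of the full tuple
  have hgfib : ∀ y : (t : E) → V t, MeasurableSet {ω | (fun t => Z t ω) = y} := by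
    intro y
    have : {ω | (fun t => Z t ω) = y} = ⋂ t, {ω | Z t ω = y t} := by
      ext ω; simp [funext_iff]
    rw [this]
    exact MeasurableSet.iInter fun t => hfZ t (y t)
  have hbig : MeasurableSet {ω | W ω = w ∧ (∀ t ∈ D, Z t ω = z t) ∧ X ω = x} := by
    have : {ω | W ω = w ∧ (∀ t ∈ D, Z t ω = z t) ∧ X ω = x}
        = {ω | W ω = w} ∩ ((⋂ t ∈ (D : Set E), {ω | Z t ω = z t}) ∩ {ω | X ω = x}) := by
      ext ω; simp only [Set.mem_inter_iff, Set.mem_setOf_eq, Set.mem_iInter, Finset.mem_coe]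
    rw [this]
    exact (hfW w).inter ((MeasurableSet.biInter (Set.to_countable _)
      (fun t _ => hfZ t (z t))).inter (hfX x))
  -- marginalize over the full tuple
  rw [marg Pr (fun ω t => Z t ω) hgfib _ hbig]
  have hinter : ∀ y : (t : E) → V t,
      {ω | W ω = w ∧ (∀ t ∈ D, Z t ω = z t) ∧ X ω = x} ∩ {ω | (fun t => Z t ω) = y}
        = if ∀ t ∈ D, y t = z t then {ω | W ω = w ∧ (∀ t, Z t ω = y t) ∧ X ω = x}
          else ∅ := by
    intro y
    split_ifs with hy
    · ext ω
      simp only [Set.mem_inter_iff, Set.mem_setOf_eq, funext_iff]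
      constructor
      · rintro ⟨⟨h1, h2, h3⟩, h4⟩
        exact ⟨h1, h4, h3⟩
      · rintro ⟨h1, h4, h3⟩
        exact ⟨⟨h1, fun t ht => (h4 t).trans (hy t ht), h3⟩, h4⟩
    · ext ω
      simp only [Set.mem_inter_iff, Set.mem_setOf_eq, funext_iff, Set.mem_empty_iff_false,
        iff_false]
      rintro ⟨⟨h1, h2, h3⟩, h4⟩
      exact hy fun t ht => ((h4 t).symm.trans (h2 t ht))
  simp only [hinter]
  -- divide and use independence
  rw [Finset.sum_div]
  have hterm : ∀ y : (t : E) → V t,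
      (Pr (if ∀ t ∈ D, y t = z t then {ω | W ω = w ∧ (∀ t, Z t ω = y t) ∧ X ω = x}
          else ∅)).toReal / N
        = ((Pr {ω | W ω = w ∧ X ω = x}).toReal / N)
          * ∏ t, (if t ∈ D then (if y t = z t then G t (y t) else 0) else G t (y t)) := by
    intro y
    split_ifs with hy
    · rw [hindep x hx w y]
      congr 1
      refine Finset.prod_congr rfl fun t _ => ?_
      by_cases ht : t ∈ D
      · rw [if_pos ht, if_pos (hy t ht)]
      · rw [if_neg ht]
    · -- some t ∈ D has y t ≠ z t : RHS is 0
      push_neg at hy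
      obtain ⟨t, ht, hyt⟩ := hy
      rw [Finset.prod_eq_zero (Finset.mem_univ t) (by rw [if_pos ht, if_neg hyt])]
      simp
  rw [Finset.sum_congr rfl fun y _ => hterm y]
  rw [← Finset.mul_sum]
  congr 1
  -- sum over tuples of products = product of sums
  rw [← Fintype.prod_sum (fun (t : E) (u : V t) => if t ∈ D then (if u = z t then G t u else 0) else G t u)]
  have : ∀ t : E, (∑ u : V t, if t ∈ D then (if u = z t then G t u else 0) else G t u)
      = if t ∈ D then G t (z t) else 1 := by
    intro t
    by_cases ht : t ∈ D
    · simp only [if_pos ht]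
      rw [Finset.sum_ite_eq' Finset.univ (z t) (G t)]
      simp
    · simp only [if_neg ht]
      exact hGsum t
  rw [Finset.prod_congr rfl fun t _ => this t]
  rw [Finset.prod_ite_mem Finset.univ D (fun t => G t (z t)), Finset.univ_inter]


section Star
variable {Ω : Type*} [MeasurableSpace Ω] (Pr : Measure Ω) [IsProbabilityMeasure Pr]
    {S : Type*} [Fintype S] [MeasurableSpace S] [MeasurableSingletonClass S]
    {VW : Type*} [Fintype VW] [MeasurableSpace VW] [MeasurableSingletonClass VW]
    {E : Type*} [Fintype E] [DecidableEq E]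
    {V : E → Type*} [∀ s, Fintype (V s)]
    [∀ s, MeasurableSpace (V s)] [∀ s, MeasurableSingletonClass (V s)]
    (X : Ω → S) (hX : Measurable X)
    (W : Ω → VW) (hW : Measurable W)
    (Z : (s : E) → Ω → V s) (hZ : ∀ s, Measurable (Z s))
    (hindep : FamilyWithWCondIndepGiven Pr X W Z)

lemma starFac (famMarg : ∀ (D : Finset E) (z : ∀ t, V t) (w : VW) (x : S),
    Pr {ω | X ω = x} ≠ 0 →
    (Pr {ω | W ω = w ∧ (∀ t ∈ D, Z t ω = z t) ∧ X ω = x}).toReal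
        / (Pr {ω | X ω = x}).toReal
      = ((Pr {ω | W ω = w ∧ X ω = x}).toReal / (Pr {ω | X ω = x}).toReal)
        * ∏ t ∈ D, ((Pr {ω | Z t ω = z t ∧ X ω = x}).toReal / (Pr {ω | X ω = x}).toReal))
    (C : Finset E) (s : E) (hs : s ∉ C) (v : V s) (x : S)
    (f : (t : C) → V t) (w : VW) :
    (Pr {ω | Z s ω = v ∧ X ω = x ∧ (tupleRV Z C ω, W ω) = (f, w)}).toReal
        * (Pr {ω | X ω = x}).toReal
      = (Pr {ω | Z s ω = v ∧ X ω = x}).toReal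
        * (Pr {ω | X ω = x ∧ (tupleRV Z C ω, W ω) = (f, w)}).toReal := by
  classical
  have hne : Nonempty Ω := by
    rcases isEmpty_or_nonempty Ω with h | h
    · exfalso
      have h1 : Pr Set.univ = 1 := measure_univ
      rw [Set.univ_eq_empty_iff.2 h] at h1
      simp at h1
    · exact h
  obtain ⟨ω₀⟩ := hne
  set z' : ∀ t, V t := fun t =>
    if h : t ∈ C then f ⟨t, h⟩
    else if h2 : t = s then cast (congrArg V h2).symm v
    else Z t ω₀ with hz'
  have hz's : z' s = v := by
    rw [hz']
    simp [hs]
  have hz'C : ∀ (t : E) (ht : t ∈ C), z' t = f ⟨t, ht⟩ := fun t ht => dif_pos ht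
  -- event rewrites
  have E1 : {ω | Z s ω = v ∧ X ω = x ∧ (tupleRV Z C ω, W ω) = (f, w)}
      = {ω | W ω = w ∧ (∀ t ∈ insert s C, Z t ω = z' t) ∧ X ω = x} := by
    ext ω
    simp only [Set.mem_setOf_eq, Prod.mk.injEq, tupleRV, funext_iff]
    constructor
    · rintro ⟨h1, h2, h3, h4⟩
      refine ⟨h4, fun t ht => ?_, h2⟩
      rcases Finset.mem_insert.1 ht with rfl | htC
      · rw [hz's]; exact h1
      · rw [hz'C t htC]; exact h3 ⟨t, htC⟩
    · rintro ⟨h4, h5, h2⟩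
      refine ⟨?_, h2, fun t => ?_, h4⟩
      · rw [← hz's]; exact h5 s (Finset.mem_insert_self s C)
      · rw [← hz'C t t.2]
        exact h5 t (Finset.mem_insert_of_mem t.2)
  have E2 : {ω | X ω = x ∧ (tupleRV Z C ω, W ω) = (f, w)}
      = {ω | W ω = w ∧ (∀ t ∈ C, Z t ω = z' t) ∧ X ω = x} := by
    ext ω
    simp only [Set.mem_setOf_eq, Prod.mk.injEq, tupleRV, funext_iff]
    constructor
    · rintro ⟨h2, h3, h4⟩
      refine ⟨h4, fun t ht => ?_, h2⟩
      rw [hz'C t ht]; exact h3 ⟨t, ht⟩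
    · rintro ⟨h4, h5, h2⟩
      refine ⟨h2, fun t => ?_, h4⟩
      rw [← hz'C t t.2]; exact h5 t t.2
  by_cases hx : Pr {ω | X ω = x} = 0
  · have hz1 : (Pr {ω | X ω = x}).toReal = 0 := by rw [hx]; simp
    have hz2 : (Pr {ω | X ω = x ∧ (tupleRV Z C ω, W ω) = (f, w)}).toReal = 0 := by
      rw [measure_mono_null (fun ω h => h.1) hx]; simp
    rw [hz1, hz2]
    ring
  · set N := (Pr {ω | X ω = x}).toReal with hN
    have hNpos : 0 < N := ENNReal.toReal_pos hx (measure_ne_top Pr _)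
    have h1 := famMarg (insert s C) z' w x hx
    have h2 := famMarg C z' w x hx
    rw [Finset.prod_insert hs] at h1
    rw [E1, E2]
    set a := (Pr {ω | W ω = w ∧ (∀ t ∈ insert s C, Z t ω = z' t) ∧ X ω = x}).toReal
    set b := (Pr {ω | W ω = w ∧ (∀ t ∈ C, Z t ω = z' t) ∧ X ω = x}).toReal
    set g := (Pr {ω | Z s ω = z' s ∧ X ω = x}).toReal with hg
    have hgv : (Pr {ω | Z s ω = v ∧ X ω = x}).toReal = g := by rw [hg, hz's]
    rw [hgv]
    set Hw := (Pr {ω | W ω = w ∧ X ω = x}).toReal / N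
    set K := ∏ t ∈ C, ((Pr {ω | Z t ω = z' t ∧ X ω = x}).toReal / N)
    -- h1 : a / N = Hw * (g / N * K), h2 : b / N = Hw * K
    have ha : a = Hw * (g / N * K) * N := by
      rw [← h1, ← hN]; field_simp
    have hb : b = Hw * K * N := by
      rw [← h2, ← hN]; field_simp
    rw [ha, hb]
    field_simp
end Star



section Regroup
variable {Ω : Type*} [MeasurableSpace Ω] (Pr : Measure Ω)
    {VW : Type*} [Fintype VW]
    {E : Type*} [Fintype E] [DecidableEq E]
    {V : E → Type*} [∀ s, Fintype (V s)]
    (W : Ω → VW) (Z : (s : E) → Ω → V s)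

lemma idPairLem (A B : Finset E) (hAB : A ⊆ B) :
    Hent Pr (fun ω => (tupleRV Z (B \ A) ω, (tupleRV Z A ω, W ω)))
      = Hent Pr (fun ω => (tupleRV Z B ω, W ω)) := by
  refine Hent_comp_inj Pr (fun ω => (tupleRV Z B ω, W ω))
    (fun q => ((fun t : ↥(B \ A) => q.1 ⟨t.1, (Finset.mem_sdiff.1 t.2).1⟩),
      ((fun t : ↥A => q.1 ⟨t.1, hAB t.2⟩), q.2))) ?_
  intro q q' h
  simp only [Prod.mk.injEq] at h
  obtain ⟨h1, h2, h3⟩ := h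
  have hq : q.1 = q'.1 := by
    funext t
    rcases t with ⟨t, htB⟩
    by_cases htA : t ∈ A
    · exact congrFun h2 ⟨t, htA⟩
    · exact congrFun h1 ⟨t, Finset.mem_sdiff.2 ⟨htB, htA⟩⟩
  rcases q with ⟨f, w⟩; rcases q' with ⟨f', w'⟩
  simp_all

lemma idTripleLem {κ : Type*} [Fintype κ] (Y : Ω → κ) (A B : Finset E) (hAB : A ⊆ B) :
    Hent Pr (fun ω => (Y ω, tupleRV Z (B \ A) ω, (tupleRV Z A ω, W ω)))
      = Hent Pr (fun ω => (Y ω, tupleRV Z B ω, W ω)) := by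
  refine Hent_comp_inj Pr (fun ω => (Y ω, tupleRV Z B ω, W ω))
    (fun q => (q.1, (fun t : ↥(B \ A) => q.2.1 ⟨t.1, (Finset.mem_sdiff.1 t.2).1⟩),
      ((fun t : ↥A => q.2.1 ⟨t.1, hAB t.2⟩), q.2.2))) ?_
  intro q q' h
  simp only [Prod.mk.injEq] at h
  obtain ⟨h0, h1, h2, h3⟩ := h
  have hq : q.2.1 = q'.2.1 := by
    funext t
    rcases t with ⟨t, htB⟩
    by_cases htA : t ∈ A
    · exact congrFun h2 ⟨t, htA⟩
    · exact congrFun h1 ⟨t, Finset.mem_sdiff.2 ⟨htB, htA⟩⟩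
  rcases q with ⟨y, f, w⟩; rcases q' with ⟨y', f', w'⟩
  simp_all
end Regroup

/-- If `W` together with the family `(Z s)_{s ∈ E}` is conditionally independent given `X`,
then the set function `A ↦ I(X; Z_A | W)` is submodular and nondecreasing, with
`I(X; Z_∅ | W) = 0`. -/
theorem condMutualInfo_tuple_submodular_monotone
    {Ω : Type*} [MeasurableSpace Ω] (Pr : Measure Ω) [IsProbabilityMeasure Pr]
    {S : Type*} [Fintype S] [MeasurableSpace S] [MeasurableSingletonClass S]
    {VW : Type*} [Fintype VW] [MeasurableSpace VW] [MeasurableSingletonClass VW]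
    {E : Type*} [Fintype E] [DecidableEq E]
    {V : E → Type*} [∀ s, Fintype (V s)]
    [∀ s, MeasurableSpace (V s)] [∀ s, MeasurableSingletonClass (V s)]
    (X : Ω → S) (hX : Measurable X)
    (W : Ω → VW) (hW : Measurable W)
    (Z : (s : E) → Ω → V s) (hZ : ∀ s, Measurable (Z s))
    (hindep : FamilyWithWCondIndepGiven Pr X W Z) :
    Submodular (fun A => condMutualInfo Pr X (tupleRV Z A) W)
    ∧ (∀ A B : Finset E, A ⊆ B →
        condMutualInfo Pr X (tupleRV Z A) W ≤ condMutualInfo Pr X (tupleRV Z B) W)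
    ∧ condMutualInfo Pr X (tupleRV Z (∅ : Finset E)) W = 0 := by
  classical
  -- fiber measurability
  have hfX : ∀ x : S, MeasurableSet {ω | X ω = x} := fun x => hX (measurableSet_singleton x)
  have hfW : ∀ w : VW, MeasurableSet {ω | W ω = w} := fun w => hW (measurableSet_singleton w)
  have hfZ : ∀ (t : E) (u : V t), MeasurableSet {ω | Z t ω = u} :=
    fun t u => hZ t (measurableSet_singleton u)
  have hfT : ∀ (A : Finset E) (g : (t : A) → V t), MeasurableSet {ω | tupleRV Z A ω = g} := by
    intro A g
    have hset : {ω | tupleRV Z A ω = g} = ⋂ t : A, {ω | Z t ω = g t} := by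
      ext ω; simp [tupleRV, funext_iff]
    rw [hset]
    exact MeasurableSet.iInter fun t => hfZ t (g t)
  have hfWr : ∀ (A : Finset E) (c : ((t : A) → V t) × VW),
      MeasurableSet {ω | (tupleRV Z A ω, W ω) = c} := by
    intro A c
    have hset : {ω | (tupleRV Z A ω, W ω) = c}
        = {ω | tupleRV Z A ω = c.1} ∩ {ω | W ω = c.2} := by
      ext ω; simp [Prod.ext_iff]
    rw [hset]
    exact (hfT A c.1).inter (hfW c.2)
  -- the reduced set function
  set Gfn : Finset E → ℝ := fun A =>
    Hent Pr (fun ω => (tupleRV Z A ω, W ω))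
      - Hent Pr (fun ω => (X ω, tupleRV Z A ω, W ω)) with hGfn
  have hF : ∀ A : Finset E, condMutualInfo Pr X (tupleRV Z A) W
      = (Hent Pr (fun ω => (X ω, W ω)) - Hent Pr W) + Gfn A := by
    intro A
    have hre : Hent Pr (fun ω => ((X ω, tupleRV Z A ω), W ω))
        = Hent Pr (fun ω => (X ω, tupleRV Z A ω, W ω)) :=
      Hent_comp_inj Pr (fun ω => (X ω, tupleRV Z A ω, W ω))
        (fun q => ((q.1, q.2.1), q.2.2))
        (fun q q' h => by
          rcases q with ⟨a, b, c⟩; rcases q' with ⟨a', b', c'⟩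
          simp_all [Prod.ext_iff])
    unfold condMutualInfo condHent
    beta_reduce
    rw [hre, hGfn]
    ring
  -- monotonicity of Gfn
  have hGmono : ∀ A B : Finset E, A ⊆ B → Gfn A ≤ Gfn B := by
    intro A B hAB
    have hsub := hent_strong_subadd Pr X (tupleRV Z (B \ A))
      (fun ω => (tupleRV Z A ω, W ω)) hfX (hfT (B \ A)) (hfWr A)
    have i1 := idTripleLem Pr W Z X A B hAB
    have i2 := idPairLem Pr W Z A B hAB
    simp only [hGfn]
    linarith [hsub, i1, i2]
  -- the step identity from conditional independence
  have hstep : ∀ (s : E) (C : Finset E), s ∉ C →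
      Gfn (insert s C) - Gfn C
        = (Hent Pr (fun ω => (Z s ω, tupleRV Z C ω, W ω))
            - Hent Pr (fun ω => (tupleRV Z C ω, W ω)))
          - (Hent Pr (fun ω => (Z s ω, X ω)) - Hent Pr X) := by
    intro s C hsC
    have id1 : Hent Pr (fun ω => (tupleRV Z (insert s C) ω, W ω))
        = Hent Pr (fun ω => (Z s ω, tupleRV Z C ω, W ω)) := by
      refine (Hent_comp_inj Pr (fun ω => (tupleRV Z (insert s C) ω, W ω))
        (fun q => (q.1 ⟨s, Finset.mem_insert_self s C⟩,
          ((fun t : ↥C => q.1 ⟨t.1, Finset.mem_insert_of_mem t.2⟩), q.2))) ?_).symm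
      intro q q' h
      simp only [Prod.mk.injEq] at h
      obtain ⟨h1, h2, h3⟩ := h
      have hq : q.1 = q'.1 := by
        funext t
        rcases t with ⟨t, htI⟩
        rcases Finset.mem_insert.1 htI with rfl | htC
        · exact h1
        · exact congrFun h2 ⟨t, htC⟩
      rcases q with ⟨f, w⟩; rcases q' with ⟨f', w'⟩
      simp_all
    have id2 : Hent Pr (fun ω => (X ω, tupleRV Z (insert s C) ω, W ω))
        = Hent Pr (fun ω => (Z s ω, X ω, (tupleRV Z C ω, W ω))) := by
      refine (Hent_comp_inj Pr (fun ω => (X ω, tupleRV Z (insert s C) ω, W ω))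
        (fun q => (q.2.1 ⟨s, Finset.mem_insert_self s C⟩,
          (q.1, ((fun t : ↥C => q.2.1 ⟨t.1, Finset.mem_insert_of_mem t.2⟩), q.2.2)))) ?_).symm
      intro q q' h
      simp only [Prod.mk.injEq] at h
      obtain ⟨h1, h0, h2, h3⟩ := h
      have hq : q.2.1 = q'.2.1 := by
        funext t
        rcases t with ⟨t, htI⟩
        rcases Finset.mem_insert.1 htI with rfl | htC
        · exact h1
        · exact congrFun h2 ⟨t, htC⟩
      rcases q with ⟨y, f, w⟩; rcases q' with ⟨y', f', w'⟩
      simp_all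
    have hfac : ∀ (a : V s) (b : S) (c : ((t : C) → V t) × VW),
        (Pr {ω | Z s ω = a ∧ X ω = b ∧ (tupleRV Z C ω, W ω) = c}).toReal
            * (Pr {ω | X ω = b}).toReal
          = (Pr {ω | Z s ω = a ∧ X ω = b}).toReal
            * (Pr {ω | X ω = b ∧ (tupleRV Z C ω, W ω) = c}).toReal := by
      rintro a b ⟨g, w'⟩
      exact starFac Pr X W Z
        (fun D z w x hx => famMarg Pr X hX W hW Z hZ hindep D z w x hx)
        C s hsC a b g w'
    have hci := hent_condIndep_eq Pr (Z s) X (fun ω => (tupleRV Z C ω, W ω))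
      (hfZ s) hfX (hfWr C) hfac
    simp only [hGfn]
    rw [id1, id2]
    linarith [hci]
  -- conditioning reduces entropy of Z s:
  have hcond : ∀ (s : E) (A B : Finset E), A ⊆ B →
      Hent Pr (fun ω => (Z s ω, tupleRV Z B ω, W ω))
          - Hent Pr (fun ω => (tupleRV Z B ω, W ω))
        ≤ Hent Pr (fun ω => (Z s ω, tupleRV Z A ω, W ω))
          - Hent Pr (fun ω => (tupleRV Z A ω, W ω)) := by
    intro s A B hAB
    have hsub := hent_strong_subadd Pr (Z s) (tupleRV Z (B \ A))
      (fun ω => (tupleRV Z A ω, W ω)) (hfZ s) (hfT (B \ A)) (hfWr A)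
    have i1 := idTripleLem Pr W Z (Z s) A B hAB
    have i2 := idPairLem Pr W Z A B hAB
    linarith [hsub, i1, i2]
  refine ⟨?_, ?_, ?_⟩
  · -- submodularity
    intro A B hAB s hsB
    beta_reduce
    have hsA : s ∉ A := fun h => hsB (hAB h)
    rw [ge_iff_le, hF (insert s A), hF A, hF (insert s B), hF B]
    have h1 := hstep s A hsA
    have h2 := hstep s B hsB
    have h3 := hcond s A B hAB
    linarith [h1, h2, h3]
  · -- monotone
    intro A B hAB
    rw [hF A, hF B]
    linarith [hGmono A B hAB]
  · -- empty set
    haveI hie : IsEmpty ((∅ : Finset E) : Type _) := Finset.isEmpty_coe_sort.2 rfl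
    set d : (t : ((∅ : Finset E) : Type _)) → V t := fun t => isEmptyElim t with hd
    have hfun1 : (fun ω => ((X ω, tupleRV Z (∅ : Finset E) ω), W ω))
        = (fun ω => ((X ω, d), W ω)) := by
      funext ω
      rw [Subsingleton.elim (tupleRV Z (∅ : Finset E) ω) d]
    have hfun2 : (fun ω => (tupleRV Z (∅ : Finset E) ω, W ω))
        = (fun ω => (d, W ω)) := by
      funext ω
      rw [Subsingleton.elim (tupleRV Z (∅ : Finset E) ω) d]
    have hA : Hent Pr (fun ω => ((X ω, d), W ω)) = Hent Pr (fun ω => (X ω, W ω)) :=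
      Hent_comp_inj Pr (fun ω => (X ω, W ω)) (fun q => ((q.1, d), q.2))
        (fun q q' h => by
          rcases q with ⟨a, b⟩; rcases q' with ⟨a', b'⟩; simp_all)
    have hB : Hent Pr (fun ω => (d, W ω)) = Hent Pr W :=
      Hent_comp_inj Pr W (fun w => (d, w)) (fun a b h => by simp_all)
    unfold condMutualInfo condHent
    beta_reduce
    rw [hfun1, hfun2, hA, hB]
    ring
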